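/- Let T > 0, H > 0, let (λ_k)_{k∈ℕ} be real numbers with |λ_k| ≤ C·k^(−(H+1/2)) for all k ≥ 1 and some C > 0, and let (e_k)_{k∈ℕ} be continuous functions ℝ → ℝ that are uniformly bounded (sup_k sup_x |e_k(x)| ≤ M for some M > 0) and uniformly L-Lipschitz (|e_k(x) − e_k(y)| ≤ L·|x − y| for all k, x, y and some L > 0). Let (Z_k)_{k∈ℕ} be a sequence of independent standard Gaussian random variables on a probability space (Ω, ℱ, P), so that almost surely the series Σ_{k=0}^∞ λ_k·e_k(kπt/T)·Z_k converges uniformly on [0,T]. Then there exists A > 0 such that for every integer N ≥ 2, E[ sup_{t∈[0,T]} | Σ_{k=N}^∞ λ_k·e_k(kπt/T)·Z_k | ] ≤ A·N^(−H)·√(log N). -/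

import Mathlib

open MeasureTheory Real Filter Set ProbabilityTheory

open Topology
open scoped ENNReal NNReal

lemma gauss_pdf_mul_exp (s x : ℝ) :
    gaussianPDFReal 0 1 x * rexp (s * x) = rexp (s ^ 2 / 2) * gaussianPDFReal s 1 x := by
  simp only [gaussianPDFReal, NNReal.coe_one, mul_one, sub_zero]
  rw [mul_assoc, ← Real.exp_add, mul_comm (rexp (s ^ 2 / 2)), mul_assoc, ← Real.exp_add]
  ring_nf

lemma integrable_exp_mul_gaussian (s : ℝ) :
    Integrable (fun x => rexp (s * x)) (gaussianReal 0 1) := by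
  rw [gaussianReal_of_var_ne_zero 0 one_ne_zero]
  rw [integrable_withDensity_iff (measurable_gaussianPDF 0 1)
    (Filter.Eventually.of_forall fun x => ENNReal.ofReal_lt_top)]
  have : (fun x => rexp (s * x) * (gaussianPDF 0 1 x).toReal)
      = fun x => rexp (s ^ 2 / 2) * gaussianPDFReal s 1 x := by
    ext x
    rw [gaussianPDF, ENNReal.toReal_ofReal (gaussianPDFReal_nonneg 0 1 x), mul_comm,
      gauss_pdf_mul_exp]
  rw [this]
  exact (integrable_gaussianPDFReal s 1).const_mul _

lemma integral_exp_mul_gaussian (s : ℝ) :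
    ∫ x, rexp (s * x) ∂(gaussianReal 0 1) = rexp (s ^ 2 / 2) := by
  rw [gaussianReal_of_var_ne_zero 0 one_ne_zero]
  have h : ∀ x : ℝ, gaussianPDF 0 1 x = ((gaussianPDFReal 0 1 x).toNNReal : ℝ≥0∞) := by
    intro x; rfl
  rw [show gaussianPDF 0 1 = (fun x => ((gaussianPDFReal 0 1 x).toNNReal : ℝ≥0∞)) from funext h]
  rw [integral_withDensity_eq_integral_smul
      ((measurable_gaussianPDFReal 0 1).real_toNNReal)]
  have : (fun x => (gaussianPDFReal 0 1 x).toNNReal • rexp (s * x))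
      = fun x => rexp (s ^ 2 / 2) * gaussianPDFReal s 1 x := by
    ext x
    rw [NNReal.smul_def, smul_eq_mul, Real.coe_toNNReal _ (gaussianPDFReal_nonneg 0 1 x),
      gauss_pdf_mul_exp]
  rw [this, integral_const_mul, integral_gaussianPDFReal_eq_one s one_ne_zero, mul_one]

lemma measurable_finset_sup' {Ω ι : Type*} [MeasurableSpace Ω] (s : Finset ι) (hs : s.Nonempty)
    (f : ι → Ω → ℝ) (hf : ∀ i ∈ s, Measurable (f i)) :
    Measurable (fun ω => s.sup' hs fun i => f i ω) := by
  induction hs using Finset.Nonempty.cons_induction with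
  | singleton a =>
      have h : (fun ω => ({a} : Finset ι).sup' (Finset.singleton_nonempty a) fun i => f i ω)
          = f a := by
        funext ω; simp
      rw [h]; exact hf a (by simp)
  | cons a s ha hne ih =>
      have h : (fun ω => (Finset.cons a s ha).sup' (Finset.cons_nonempty ha) fun i => f i ω)
          = fun ω => (f a ω) ⊔ (s.sup' hne fun i => f i ω) := by
        funext ω; exact Finset.sup'_cons hne _
      rw [h]
      exact (hf a (Finset.mem_cons_self a s)).max
        (ih fun i hi => hf i (Finset.mem_cons_of_mem hi))

lemma exp_max_bound {Ω : Type*} [MeasurableSpace Ω] (P : Measure Ω) [IsProbabilityMeasure P]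
    {ι : Type*} (s : Finset ι) (hs : s.Nonempty) (G : ι → Ω → ℝ)
    (v : ℝ) (hv : 0 < v)
    (hx : 1 ≤ Real.log (2 * s.card))
    (hint : ∀ i ∈ s, ∀ β : ℝ, Integrable (fun ω => rexp (β * G i ω)) P)
    (hmgf : ∀ i ∈ s, ∀ β : ℝ, ∫ ω, rexp (β * G i ω) ∂P ≤ rexp (β ^ 2 * v / 2)) :
    ∫ ω, s.sup' hs (fun i => |G i ω|) ∂P
      ≤ 3 * Real.sqrt v * Real.sqrt (Real.log (2 * s.card)) := by
  set x : ℝ := Real.log (2 * s.card) with hxdef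
  have hx0 : 0 < x := lt_of_lt_of_le one_pos hx
  set β : ℝ := Real.sqrt (2 * x / v) with hβdef
  have hβ : 0 < β := Real.sqrt_pos.2 (by positivity)
  have hβsq : β ^ 2 = 2 * x / v := Real.sq_sqrt (by positivity)
  set a : ℝ := 2 * x / β with hadef
  have hβa : β * a = 2 * x := by rw [hadef]; field_simp
  have hcard : (0:ℝ) < s.card := by
    have := Finset.card_pos.mpr hs
    exact_mod_cast this
  set c2 : ℝ := 2 * s.card with hc2def
  have hc2 : 0 < c2 := by positivity
  have hexpx : rexp x = c2 := Real.exp_log hc2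
  set S : Ω → ℝ := fun ω => ∑ i ∈ s, (rexp (β * G i ω) + rexp (-β * G i ω)) with hSdef
  have hSint : Integrable S P := by
    rw [hSdef]
    exact integrable_finset_sum s fun i hi => (hint i hi β).add (hint i hi (-β))
  set g : Ω → ℝ := fun ω => a + (rexp (-(β * a)) / β) * S ω with hgdef
  have hpoint : ∀ ω, (s.sup' hs fun i => |G i ω|) ≤ g ω := by
    intro ω
    apply Finset.sup'_le
    intro i hi
    have h0 : β * (|G i ω| - a) ≤ rexp (β * (|G i ω| - a)) := by
      linarith [Real.add_one_le_exp (β * (|G i ω| - a))]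
    have h1 : rexp (β * |G i ω|) ≤ rexp (β * G i ω) + rexp (-β * G i ω) := by
      rcases abs_cases (G i ω) with ⟨h, _⟩ | ⟨h, _⟩
      · rw [h]; nlinarith [Real.exp_pos (-β * G i ω)]
      · rw [h, show β * -G i ω = -β * G i ω by ring]
        nlinarith [Real.exp_pos (β * G i ω)]
    have h2 : (rexp (β * G i ω) + rexp (-β * G i ω)) ≤ S ω := by
      rw [hSdef]
      exact Finset.single_le_sum
        (f := fun j => rexp (β * G j ω) + rexp (-β * G j ω)) (fun j _ => by positivity) hi
    have h4 : β * (|G i ω| - a) ≤ rexp (β * |G i ω|) * rexp (-(β * a)) := by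
      calc β * (|G i ω| - a) ≤ rexp (β * (|G i ω| - a)) := h0
      _ = rexp (β * |G i ω|) * rexp (-(β * a)) := by
          rw [← Real.exp_add]; ring_nf
    have h5 : β * (|G i ω| - a)
        ≤ (rexp (β * G i ω) + rexp (-β * G i ω)) * rexp (-(β * a)) := by
      refine h4.trans ?_
      have := (Real.exp_pos (-(β * a))).le
      nlinarith
    have h3 : |G i ω| - a ≤ (rexp (-(β * a)) / β) * (rexp (β * G i ω) + rexp (-β * G i ω)) := by
      rw [div_mul_eq_mul_div, le_div_iff₀ hβ]
      nlinarith
    have h6 : (rexp (-(β * a)) / β) * (rexp (β * G i ω) + rexp (-β * G i ω))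
        ≤ (rexp (-(β * a)) / β) * S ω :=
      mul_le_mul_of_nonneg_left h2 (by positivity)
    have : g ω = a + (rexp (-(β * a)) / β) * S ω := rfl
    rw [this]
    linarith
  have hgint : Integrable g P := (integrable_const a).add (hSint.const_mul _)
  have hEsum : ∫ ω, S ω ∂P ≤ c2 * c2 := by
    have hrw1 : ∫ ω, S ω ∂P
        = ∑ i ∈ s, ∫ ω, (rexp (β * G i ω) + rexp (-β * G i ω)) ∂P := by
      rw [hSdef]
      exact integral_finset_sum (f := fun i ω => rexp (β * G i ω) + rexp (-β * G i ω)) s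
        (fun i hi => (hint i hi β).add (hint i hi (-β)))
    rw [hrw1]
    have hper : ∀ i ∈ s, ∫ ω, (rexp (β * G i ω) + rexp (-β * G i ω)) ∂P ≤ 2 * rexp x := by
      intro i hi
      rw [integral_add (hint i hi β) (hint i hi (-β))]
      have b1 := hmgf i hi β
      have b2 := hmgf i hi (-β)
      rw [show (-β) ^ 2 = β ^ 2 by ring] at b2
      have hvx : β ^ 2 * v / 2 = x := by rw [hβsq]; field_simp
      rw [hvx] at b1 b2
      linarith
    calc ∑ i ∈ s, ∫ ω, (rexp (β * G i ω) + rexp (-β * G i ω)) ∂P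
        ≤ ∑ _i ∈ s, 2 * rexp x := Finset.sum_le_sum hper
      _ = s.card * (2 * rexp x) := by rw [Finset.sum_const, nsmul_eq_mul]
      _ = c2 * c2 := by rw [hexpx, hc2def]; ring
  have hEg : ∫ ω, g ω ∂P ≤ a + 1 / β := by
    have heq : ∫ ω, g ω ∂P = a + (rexp (-(β * a)) / β) * ∫ ω, S ω ∂P := by
      rw [hgdef]
      rw [integral_add (integrable_const a) (hSint.const_mul _), integral_const,
        integral_const_mul, probReal_univ, one_smul]
    rw [heq]
    have hrw : rexp (-(β * a)) = c2⁻¹ * c2⁻¹ := by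
      rw [hβa, show -(2*x) = -x + -x by ring, Real.exp_add, Real.exp_neg, hexpx]
    have hone : rexp (-(β * a)) * (c2 * c2) = 1 := by
      rw [hrw, mul_mul_mul_comm, inv_mul_cancel₀ hc2.ne', one_mul]
    have hmul : (rexp (-(β * a)) / β) * (c2 * c2) = 1 / β := by
      rw [div_mul_eq_mul_div, hone]
    have hle : (rexp (-(β * a)) / β) * ∫ ω, S ω ∂P ≤ (rexp (-(β * a)) / β) * (c2 * c2) :=
      mul_le_mul_of_nonneg_left hEsum (by positivity)
    rw [hmul] at hle
    linarith
  obtain ⟨i0, hi0⟩ := id hs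
  have h7 : ∫ ω, (s.sup' hs fun i => |G i ω|) ∂P ≤ ∫ ω, g ω ∂P := by
    refine integral_mono_of_nonneg (Filter.Eventually.of_forall fun ω => ?_) hgint
      (Filter.Eventually.of_forall hpoint)
    exact le_trans (abs_nonneg (G i0 ω)) (Finset.le_sup' (fun i => |G i ω|) hi0)
  have hβv : β * Real.sqrt v = Real.sqrt (2 * x) := by
    rw [hβdef, ← Real.sqrt_mul (by positivity)]
    congr 1
    field_simp
  have hfin : a + 1 / β ≤ 3 * Real.sqrt v * Real.sqrt x := by
    have h8 : a + 1 / β = (2 * x + 1) / β := by rw [hadef, ← add_div]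
    rw [h8, div_le_iff₀ hβ]
    have e1 : 3 * Real.sqrt v * Real.sqrt x * β = 3 * Real.sqrt 2 * x := by
      rw [show 3 * Real.sqrt v * Real.sqrt x * β = 3 * Real.sqrt x * (β * Real.sqrt v) by ring,
        hβv, Real.sqrt_mul (by norm_num : (0:ℝ) ≤ 2),
        show 3 * Real.sqrt x * (Real.sqrt 2 * Real.sqrt x)
          = 3 * Real.sqrt 2 * (Real.sqrt x * Real.sqrt x) by ring,
        Real.mul_self_sqrt hx0.le]
    rw [e1]
    have hs2 : (1:ℝ) ≤ Real.sqrt 2 := by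
      rw [show (1:ℝ) = Real.sqrt 1 by simp]
      exact Real.sqrt_le_sqrt (by norm_num)
    nlinarith
  calc ∫ ω, (s.sup' hs fun i => |G i ω|) ∂P ≤ ∫ ω, g ω ∂P := h7
    _ ≤ a + 1 / β := hEg
    _ ≤ 3 * Real.sqrt v * Real.sqrt x := hfin

lemma int_exp_of_law {Ω : Type*} [MeasurableSpace Ω] (P : Measure Ω) (W : Ω → ℝ)
    (hm : Measurable W) (hl : P.map W = gaussianReal 0 1) (s : ℝ) :
    Integrable (fun ω => rexp (s * W ω)) P := by
  have hgm : Measurable (fun x : ℝ => rexp (s * x)) := Real.measurable_exp.comp (measurable_id.const_mul s)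
  have h : Integrable (fun x => rexp (s * x)) (P.map W) := by
    rw [hl]; exact integrable_exp_mul_gaussian s
  exact (integrable_map_measure (f := W) (g := fun x => rexp (s * x))
      hgm.aestronglyMeasurable hm.aemeasurable).mp h

lemma integral_exp_of_law {Ω : Type*} [MeasurableSpace Ω] (P : Measure Ω) (W : Ω → ℝ)
    (hm : Measurable W) (hl : P.map W = gaussianReal 0 1) (s : ℝ) :
    ∫ ω, rexp (s * W ω) ∂P = rexp (s ^ 2 / 2) := by
  have hgm : Measurable (fun x : ℝ => rexp (s * x)) := Real.measurable_exp.comp (measurable_id.const_mul s)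
  have h : ∫ x, rexp (s * x) ∂(P.map W) = ∫ ω, rexp (s * W ω) ∂P :=
    integral_map hm.aemeasurable hgm.aestronglyMeasurable
  rw [← h, hl, integral_exp_mul_gaussian]

lemma exp_half_le_two : rexp (1/2 : ℝ) ≤ 2 := by
  have h2 : rexp (1/2 : ℝ) * rexp (1/2 : ℝ) = rexp 1 := by
    rw [← Real.exp_add]; norm_num
  nlinarith [Real.exp_one_lt_d9, Real.exp_pos (1/2 : ℝ)]

lemma abs_le_exp_add_exp (x : ℝ) : |x| ≤ rexp (1 * x) + rexp ((-1) * x) := by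
  rcases abs_cases x with ⟨h, _⟩ | ⟨h, _⟩ <;> rw [h] <;>
    nlinarith [Real.add_one_le_exp (1 * x), Real.add_one_le_exp ((-1) * x),
      Real.exp_pos (1 * x), Real.exp_pos ((-1) * x)]

lemma int_abs_of_law {Ω : Type*} [MeasurableSpace Ω] (P : Measure Ω) (W : Ω → ℝ)
    (hm : Measurable W) (hl : P.map W = gaussianReal 0 1) :
    Integrable (fun ω => |W ω|) P := by
  refine Integrable.mono' ((int_exp_of_law P W hm hl 1).add (int_exp_of_law P W hm hl (-1)))
    (hm.abs.aestronglyMeasurable) (Filter.Eventually.of_forall fun ω => ?_)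
  rw [Real.norm_eq_abs, abs_abs]
  exact abs_le_exp_add_exp (W ω)

lemma integral_abs_of_law {Ω : Type*} [MeasurableSpace Ω] (P : Measure Ω) (W : Ω → ℝ)
    (hm : Measurable W) (hl : P.map W = gaussianReal 0 1) :
    ∫ ω, |W ω| ∂P ≤ 4 := by
  have h1 : ∫ ω, |W ω| ∂P ≤ ∫ ω, (rexp (1 * W ω) + rexp ((-1) * W ω)) ∂P :=
    integral_mono (int_abs_of_law P W hm hl)
      ((int_exp_of_law P W hm hl 1).add (int_exp_of_law P W hm hl (-1)))
      (fun ω => abs_le_exp_add_exp (W ω))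
  rw [integral_add (int_exp_of_law P W hm hl 1) (int_exp_of_law P W hm hl (-1)),
    integral_exp_of_law P W hm hl, integral_exp_of_law P W hm hl] at h1
  have h3 : ((1:ℝ)) ^ 2 / 2 = 1/2 := by norm_num
  have h4 : ((-1:ℝ)) ^ 2 / 2 = 1/2 := by norm_num
  rw [h3, h4] at h1
  linarith [exp_half_le_two]

lemma combo_mgf {Ω : Type*} [MeasurableSpace Ω] (P : Measure Ω) [IsProbabilityMeasure P]
    (Z : ℕ → Ω → ℝ) (hZmeas : ∀ k, Measurable (Z k))
    (hZindep : iIndepFun Z P)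
    (hZlaw : ∀ k, P.map (Z k) = gaussianReal 0 1)
    (c : ℕ → ℝ) (B : Finset ℕ) (β : ℝ) :
    Integrable (fun ω => rexp (β * ∑ k ∈ B, c k * Z k ω)) P ∧
    ∫ ω, rexp (β * ∑ k ∈ B, c k * Z k ω) ∂P = rexp (β ^ 2 * (∑ k ∈ B, (c k) ^ 2) / 2) := by
  set X : ℕ → Ω → ℝ := fun k ω => c k * Z k ω with hXdef
  have hXmeas : ∀ k, Measurable (X k) := fun k => (hZmeas k).const_mul (c k)
  have hXindep : iIndepFun X P := by
    have := hZindep.comp (fun k (x : ℝ) => c k * x)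
      (fun k => measurable_const.mul measurable_id)
    exact this
  have hXint : ∀ k, ∀ t : ℝ, Integrable (fun ω => rexp (t * X k ω)) P := by
    intro k t
    have h := int_exp_of_law P (Z k) (hZmeas k) (hZlaw k) (t * c k)
    refine h.congr (Filter.Eventually.of_forall fun ω => ?_)
    simp only [hXdef]; ring_nf
  constructor
  · have h := iIndepFun.integrable_exp_mul_sum (t := β) hXindep hXmeas
      (s := B) (fun k _ => hXint k β)
    refine h.congr (Filter.Eventually.of_forall fun ω => ?_)
    simp only [Finset.sum_apply, hXdef]
  · have h := iIndepFun.mgf_sum (t := β) hXindep hXmeas B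
    have hmgfk : ∀ k, mgf (X k) P β = rexp ((β * c k) ^ 2 / 2) := by
      intro k
      have h2 : mgf (X k) P β = ∫ ω, rexp ((β * c k) * Z k ω) ∂P := by
        unfold mgf
        congr 1
        funext ω
        simp only [hXdef]
        ring_nf
      rw [h2, integral_exp_of_law P (Z k) (hZmeas k) (hZlaw k)]
    have hL : ∫ ω, rexp (β * ∑ k ∈ B, c k * Z k ω) ∂P = mgf (∑ i ∈ B, X i) P β := by
      unfold mgf
      congr 1
      funext ω
      simp only [Finset.sum_apply, hXdef]
    rw [hL, h]
    have hcg : ∀ k ∈ B, mgf (X k) P β = rexp ((β * c k) ^ 2 / 2) := fun k _ => hmgfk k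
    rw [Finset.prod_congr rfl hcg, ← Real.exp_sum]
    congr 1
    rw [Finset.mul_sum, ← Finset.sum_div]
    congr 1
    exact Finset.sum_congr rfl fun k _ => by ring

set_option maxHeartbeats 1600000 in
theorem block_bound
    {Ω : Type*} [MeasurableSpace Ω] (P : Measure Ω) [IsProbabilityMeasure P]
    (T H C M L : ℝ) (hT : 0 < T) (hH : 0 < H) (hC : 0 < C) (hM : 0 < M) (hL : 0 < L)
    (lam : ℕ → ℝ) (hlam : ∀ k : ℕ, 1 ≤ k → |lam k| ≤ C * (k : ℝ) ^ (-(H + 1 / 2)))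
    (e : ℕ → ℝ → ℝ)
    (he_bdd : ∀ k x, |e k x| ≤ M)
    (he_lip : ∀ k x y, |e k x - e k y| ≤ L * |x - y|)
    (Z : ℕ → Ω → ℝ) (hZmeas : ∀ k, Measurable (Z k))
    (hZindep : iIndepFun Z P)
    (hZlaw : ∀ k, P.map (Z k) = gaussianReal 0 1)
    (m : ℕ) (hm : 2 ≤ m) :
    ∃ h : Ω → ℝ, Measurable h ∧ Integrable h P ∧ (∀ ω, 0 ≤ h ω) ∧
      (∀ ω, ∀ t ∈ Set.Icc (0:ℝ) T,
        |∑ k ∈ Finset.Ico m (2*m), lam k * e k (k * π * t / T) * Z k ω| ≤ h ω) ∧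
      ∫ ω, h ω ∂P ≤ (6*C*M + 8*C*L*π/Real.sqrt (Real.log 2))
        * (m:ℝ) ^ (-H) * Real.sqrt (Real.log m) := by

  have hm0 : (0:ℝ) < m := by positivity
  have hm1 : (1:ℝ) ≤ m := by exact_mod_cast Nat.one_le_of_lt hm
  have hm2 : (2:ℝ) ≤ m := by exact_mod_cast hm
  have hlog2 : (0:ℝ) < Real.log 2 := Real.log_pos one_lt_two
  have hlogm : Real.log 2 ≤ Real.log m := Real.log_le_log two_pos hm2
  have hlogm0 : (0:ℝ) < Real.log m := lt_of_lt_of_le hlog2 hlogm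
  set B : Finset ℕ := Finset.Ico m (2*m) with hBdef
  have hBcard : B.card = m := by rw [hBdef, Nat.card_Ico]; omega
  have hkB : ∀ k ∈ B, (m:ℝ) ≤ (k:ℝ) ∧ (k:ℝ) ≤ 2*m ∧ (0:ℝ) < (k:ℝ) ∧ 1 ≤ k := by
    intro k hk
    rw [hBdef, Finset.mem_Ico] at hk
    have h1 : (m:ℝ) ≤ k := by exact_mod_cast hk.1
    have h2 : (k:ℝ) ≤ 2*m := by
      have := le_of_lt hk.2
      calc (k:ℝ) ≤ ((2*m : ℕ) : ℝ) := by exact_mod_cast this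
        _ = 2*m := by push_cast; ring
    exact ⟨h1, h2, lt_of_lt_of_le hm0 h1, by omega⟩
  set n2 : ℕ := m^2 with hn2def
  have hn2R : ((n2:ℕ):ℝ) = (m:ℝ)^(2:ℕ) := by rw [hn2def]; push_cast; ring
  have hn2pos : (0:ℝ) < (n2:ℝ) := by rw [hn2R]; positivity
  set pt : ℕ → ℝ := fun i => i * T / n2 with hptdef
  set s : Finset ℕ := Finset.range (n2+1) with hsdef
  have hs : s.Nonempty := ⟨0, by rw [hsdef]; simp⟩
  set G : ℕ → Ω → ℝ := fun i ω => ∑ k ∈ B, lam k * e k (k * π * pt i / T) * Z k ω with hGdef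
  set Lip : Ω → ℝ := fun ω => ∑ k ∈ B, (|lam k| * (L * (k*π/T))) * |Z k ω| with hLipdef
  set h : Ω → ℝ := fun ω => (s.sup' hs fun i => |G i ω|) + (T/n2) * Lip ω with hhdef
  -- basic integrability facts
  have hZint : ∀ k, Integrable (Z k) P := by
    intro k
    refine Integrable.mono' (int_abs_of_law P (Z k) (hZmeas k) (hZlaw k))
      (hZmeas k).aestronglyMeasurable (Filter.Eventually.of_forall fun ω => ?_)
    rw [Real.norm_eq_abs]
  have hGmeas : ∀ i, Measurable (G i) := by
    intro i
    exact Finset.measurable_sum B fun k _ => ((hZmeas k).const_mul _)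
  have hGint : ∀ i, Integrable (G i) P := by
    intro i
    exact integrable_finset_sum B fun k _ => ((hZint k).const_mul _)
  have hsup_meas : Measurable (fun ω => s.sup' hs fun i => |G i ω|) :=
    measurable_finset_sup' s hs _ (fun i _ => (hGmeas i).abs)
  have hsup_nonneg : ∀ ω, 0 ≤ s.sup' hs fun i => |G i ω| := by
    intro ω
    exact le_trans (abs_nonneg (G 0 ω))
      (Finset.le_sup' (fun i => |G i ω|) (by rw [hsdef]; simp))
  have hsup_int : Integrable (fun ω => s.sup' hs fun i => |G i ω|) P := by
    refine Integrable.mono' (integrable_finset_sum s fun i _ => (hGint i).abs)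
      hsup_meas.aestronglyMeasurable (Filter.Eventually.of_forall fun ω => ?_)
    rw [Real.norm_eq_abs, abs_of_nonneg (hsup_nonneg ω)]
    exact Finset.sup'_le hs _ fun i hi =>
      Finset.single_le_sum (f := fun i => |G i ω|) (fun j _ => abs_nonneg _) hi
  have hLip_meas : Measurable Lip :=
    Finset.measurable_sum B fun k _ => ((hZmeas k).abs.const_mul _)
  have hLip_int : Integrable Lip P :=
    integrable_finset_sum B fun k _ =>
      ((int_abs_of_law P (Z k) (hZmeas k) (hZlaw k)).const_mul _)
  have hLip_nonneg : ∀ ω, 0 ≤ Lip ω := by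
    intro ω
    exact Finset.sum_nonneg fun k _ => by positivity
  have hTn2 : (0:ℝ) < T / n2 := by positivity
  refine ⟨h, ?_, ?_, ?_, ?_, ?_⟩
  · exact hsup_meas.add (hLip_meas.const_mul _)
  · exact hsup_int.add (hLip_int.const_mul _)
  · intro ω
    have := hsup_nonneg ω
    have := hLip_nonneg ω
    have := hTn2.le
    rw [hhdef]
    positivity
  -- pointwise bound
  · intro ω t ht
    obtain ⟨ht0, htT⟩ := ht
    set x : ℝ := t * n2 / T with hxdef
    have hx0 : 0 ≤ x := by positivity
    set i : ℕ := ⌊x⌋₊ with hidef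
    have hxn2 : x ≤ (n2:ℝ) := by
      rw [hxdef, div_le_iff₀ hT]
      nlinarith
    have hi_mem : i ∈ s := by
      rw [hsdef, Finset.mem_range, Nat.lt_succ_iff]
      have h1 : (i:ℝ) ≤ (n2:ℝ) := le_trans (Nat.floor_le hx0) hxn2
      exact_mod_cast h1
    have htx : t = x * (T / n2) := by
      rw [hxdef]; field_simp
    have hpti : pt i = i * (T / n2) := by rw [hptdef]; ring
    have hxi0 : (i:ℝ) ≤ x := Nat.floor_le hx0
    have hxi1 : x - i ≤ 1 := by
      have := (Nat.lt_floor_add_one x).le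
      linarith
    have habs : |t - pt i| ≤ T / n2 := by
      rw [htx, hpti, show x * (T/n2) - i * (T/n2) = (x - i) * (T/n2) by ring,
        abs_mul, abs_of_nonneg (by linarith : (0:ℝ) ≤ x - i), abs_of_nonneg hTn2.le]
      nlinarith
    have hdiff : |(∑ k ∈ B, lam k * e k (k * π * t / T) * Z k ω) - G i ω|
        ≤ (T/n2) * Lip ω := by
      have h1 : (∑ k ∈ B, lam k * e k (k * π * t / T) * Z k ω) - G i ω
          = ∑ k ∈ B, lam k * (e k (k * π * t / T) - e k (k * π * pt i / T)) * Z k ω := by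
        rw [hGdef, ← Finset.sum_sub_distrib]
        exact Finset.sum_congr rfl fun k _ => by ring
      rw [h1]
      have h2 : ∀ k ∈ B, |lam k * (e k (k * π * t / T) - e k (k * π * pt i / T)) * Z k ω|
          ≤ (T/n2) * ((|lam k| * (L * (k*π/T))) * |Z k ω|) := by
        intro k hk
        obtain ⟨hk1, hk2, hk3, hk4⟩ := hkB k hk
        have e1 : |lam k * (e k (k * π * t / T) - e k (k * π * pt i / T)) * Z k ω|
            = |lam k| * |e k (k * π * t / T) - e k (k * π * pt i / T)| * |Z k ω| := by
          rw [abs_mul, abs_mul]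
        have hkT : (0:ℝ) ≤ (k:ℝ) * π / T := by positivity
        have e2 : |e k (k * π * t / T) - e k (k * π * pt i / T)|
            ≤ L * ((k*π/T) * (T/n2)) := by
          refine (he_lip k _ _).trans ?_
          have e3 : |(k:ℝ) * π * t / T - k * π * pt i / T| = (k*π/T) * |t - pt i| := by
            rw [show (k:ℝ) * π * t / T - k * π * pt i / T = (k*π/T) * (t - pt i) by ring,
              abs_mul, abs_of_nonneg hkT]
          rw [e3]
          exact mul_le_mul_of_nonneg_left
            (mul_le_mul_of_nonneg_left habs hkT) hL.le
        calc |lam k * (e k (k * π * t / T) - e k (k * π * pt i / T)) * Z k ω|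
            = |lam k| * |e k (k * π * t / T) - e k (k * π * pt i / T)| * |Z k ω| := e1
          _ ≤ |lam k| * (L * ((k*π/T) * (T/n2))) * |Z k ω| := by
              refine mul_le_mul_of_nonneg_right
                (mul_le_mul_of_nonneg_left e2 (abs_nonneg _)) (abs_nonneg _)
          _ = (T/n2) * ((|lam k| * (L * (k*π/T))) * |Z k ω|) := by ring
      calc |∑ k ∈ B, lam k * (e k (k * π * t / T) - e k (k * π * pt i / T)) * Z k ω|
          ≤ ∑ k ∈ B, |lam k * (e k (k * π * t / T) - e k (k * π * pt i / T)) * Z k ω| :=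
            Finset.abs_sum_le_sum_abs _ _
        _ ≤ ∑ k ∈ B, (T/n2) * ((|lam k| * (L * (k*π/T))) * |Z k ω|) :=
            Finset.sum_le_sum h2
        _ = (T/n2) * Lip ω := by rw [hLipdef, Finset.mul_sum]
    have hfin : |∑ k ∈ B, lam k * e k (k * π * t / T) * Z k ω|
        ≤ |G i ω| + |(∑ k ∈ B, lam k * e k (k * π * t / T) * Z k ω) - G i ω| := by
      have := abs_add_le (G i ω)
        ((∑ k ∈ B, lam k * e k (k * π * t / T) * Z k ω) - G i ω)
      simpa using this
    have hGsup : |G i ω| ≤ s.sup' hs fun j => |G j ω| :=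
      Finset.le_sup' (fun j => |G j ω|) hi_mem
    rw [hhdef]
    have := hdiff
    linarith
  -- integral bound
  · set v : ℝ := C^2 * M^2 * (m:ℝ)^(-(2*H)) with hvdef
    have hv : 0 < v := by
      have := Real.rpow_pos_of_pos hm0 (-(2*H))
      positivity
    have hscard : (s.card : ℝ) = (n2:ℝ) + 1 := by rw [hsdef, Finset.card_range]; push_cast; ring
    have hx1 : 1 ≤ Real.log (2 * s.card) := by
      have hpos : (0:ℝ) < 2 * s.card := by
        rw [hscard]; positivity
      rw [Real.le_log_iff_exp_le hpos]
      have h1 : rexp 1 < 3 := lt_trans Real.exp_one_lt_d9 (by norm_num)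
      have h2 : (4:ℝ) ≤ (n2:ℝ) := by rw [hn2R]; nlinarith
      rw [hscard]
      nlinarith
    have hmgf_all : ∀ i ∈ s, ∀ β : ℝ, ∫ ω, rexp (β * G i ω) ∂P ≤ rexp (β^2 * v / 2) := by
      intro i _ β
      have hcombo := combo_mgf P Z hZmeas hZindep hZlaw
        (fun k => lam k * e k (k * π * pt i / T)) B β
      have hsum : ∑ k ∈ B, (lam k * e k (k * π * pt i / T))^2 ≤ v := by
        have hper : ∀ k ∈ B, (lam k * e k (k * π * pt i / T))^2
            ≤ C^2 * M^2 * (m:ℝ)^(-(2*H+1)) := by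
          intro k hk
          obtain ⟨hk1, hk2, hk3, hk4⟩ := hkB k hk
          have hb1 : (lam k)^2 ≤ C^2 * (k:ℝ)^(-(2*H+1)) := by
            have := hlam k hk4
            have hsq : (lam k)^2 ≤ (C * (k:ℝ)^(-(H+1/2)))^2 := by
              rw [← sq_abs]
              exact pow_le_pow_left₀ (abs_nonneg _) this 2
            refine hsq.trans_eq ?_
            rw [mul_pow]
            congr 1
            rw [← Real.rpow_natCast ((k:ℝ)^(-(H+1/2))) 2, ← Real.rpow_mul hk3.le]
            congr 1
            push_cast
            ring
          have hb2 : (e k (k * π * pt i / T))^2 ≤ M^2 := by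
            have := he_bdd k (k * π * pt i / T)
            nlinarith [abs_nonneg (e k (k * π * pt i / T)),
              sq_abs (e k (k * π * pt i / T))]
          have hb3 : (k:ℝ)^(-(2*H+1)) ≤ (m:ℝ)^(-(2*H+1)) :=
            Real.rpow_le_rpow_of_nonpos hm0 hk1 (by linarith)
          have hk0 : (0:ℝ) ≤ (k:ℝ)^(-(2*H+1)) := (Real.rpow_pos_of_pos hk3 _).le
          calc (lam k * e k (k * π * pt i / T))^2
              = (lam k)^2 * (e k (k * π * pt i / T))^2 := by ring
            _ ≤ (C^2 * (k:ℝ)^(-(2*H+1))) * M^2 := by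
                refine mul_le_mul hb1 hb2 (sq_nonneg _) (by positivity)
            _ = (C^2 * M^2) * (k:ℝ)^(-(2*H+1)) := by ring
            _ ≤ (C^2 * M^2) * (m:ℝ)^(-(2*H+1)) :=
                mul_le_mul_of_nonneg_left hb3 (by positivity)
            _ = C^2 * M^2 * (m:ℝ)^(-(2*H+1)) := by ring
        have hsum1 : ∑ k ∈ B, (lam k * e k (k * π * pt i / T))^2
            ≤ B.card • (C^2 * M^2 * (m:ℝ)^(-(2*H+1))) :=
          Finset.sum_le_card_nsmul B _ _ hper
        rw [hBcard, nsmul_eq_mul] at hsum1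
        refine hsum1.trans_eq ?_
        rw [hvdef]
        rw [show -(2*H) = 1 + -(2*H+1) by ring, Real.rpow_add hm0, Real.rpow_one]
        ring
      calc ∫ ω, rexp (β * G i ω) ∂P
          = rexp (β^2 * (∑ k ∈ B, (lam k * e k (k * π * pt i / T))^2) / 2) := hcombo.2
        _ ≤ rexp (β^2 * v / 2) := by
            apply Real.exp_le_exp.2
            have := sq_nonneg β
            nlinarith
    have hint_all : ∀ i ∈ s, ∀ β : ℝ, Integrable (fun ω => rexp (β * G i ω)) P := by
      intro i _ β
      exact (combo_mgf P Z hZmeas hZindep hZlaw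
        (fun k => lam k * e k (k * π * pt i / T)) B β).1
    have hmax := exp_max_bound P s hs G v hv hx1 hint_all hmgf_all
    -- simplify sqrt v
    have hmH : (0:ℝ) < (m:ℝ)^(-H) := Real.rpow_pos_of_pos hm0 _
    have hsqv : Real.sqrt v = C * M * (m:ℝ)^(-H) := by
      have hsq : ((m:ℝ)^(-H))^2 = (m:ℝ)^(-(2*H)) := by
        rw [← Real.rpow_natCast ((m:ℝ)^(-H)) 2, ← Real.rpow_mul hm0.le]
        congr 1
        push_cast
        ring
      have : v = (C * M * (m:ℝ)^(-H))^2 := by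
        rw [hvdef, ← hsq]; ring
      rw [this, Real.sqrt_sq (by positivity)]
    have hsqlog : Real.sqrt (Real.log (2 * s.card)) ≤ 2 * Real.sqrt (Real.log m) := by
      have h4 : (0:ℝ) < (m:ℝ)^(4:ℕ) := by positivity
      have hle : 2 * (s.card : ℝ) ≤ (m:ℝ)^(4:ℕ) := by
        rw [hscard, hn2R]
        have hm4sq : (4:ℝ) ≤ (m:ℝ)^2 := by nlinarith
        nlinarith [sq_nonneg ((m:ℝ)^2 - 2)]
      have hlog : Real.log (2 * s.card) ≤ 4 * Real.log m := by
        calc Real.log (2 * s.card) ≤ Real.log ((m:ℝ)^(4:ℕ)) :=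
              Real.log_le_log (by rw [hscard]; positivity) hle
          _ = 4 * Real.log m := by rw [Real.log_pow]; push_cast; ring
      calc Real.sqrt (Real.log (2 * s.card)) ≤ Real.sqrt (4 * Real.log m) :=
            Real.sqrt_le_sqrt hlog
        _ = 2 * Real.sqrt (Real.log m) := by
            rw [show (4:ℝ) * Real.log m = 2^2 * Real.log m by norm_num, Real.sqrt_mul (by positivity),
              Real.sqrt_sq (by norm_num : (0:ℝ) ≤ 2)]
    have hmax2 : ∫ ω, (s.sup' hs fun i => |G i ω|) ∂P
        ≤ 6 * C * M * (m:ℝ)^(-H) * Real.sqrt (Real.log m) := by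
      calc ∫ ω, (s.sup' hs fun i => |G i ω|) ∂P
          ≤ 3 * Real.sqrt v * Real.sqrt (Real.log (2 * s.card)) := hmax
        _ ≤ 3 * Real.sqrt v * (2 * Real.sqrt (Real.log m)) := by
            refine mul_le_mul_of_nonneg_left hsqlog (by positivity)
        _ = 6 * C * M * (m:ℝ)^(-H) * Real.sqrt (Real.log m) := by
            rw [hsqv]; ring
    -- Lipschitz part
    have hELip : ∫ ω, Lip ω ∂P ≤ (m:ℝ) * (4 * ((2*C*L*π/T) * (m:ℝ)^((1:ℝ)/2 - H))) := by
      have hrw : ∫ ω, Lip ω ∂P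
          = ∑ k ∈ B, (|lam k| * (L * (k*π/T))) * ∫ ω, |Z k ω| ∂P := by
        rw [hLipdef]
        rw [integral_finset_sum B (fun k _ =>
          ((int_abs_of_law P (Z k) (hZmeas k) (hZlaw k)).const_mul _))]
        exact Finset.sum_congr rfl fun k _ => integral_const_mul _ _
      rw [hrw]
      have hper : ∀ k ∈ B, (|lam k| * (L * (k*π/T))) * ∫ ω, |Z k ω| ∂P
          ≤ 4 * ((2*C*L*π/T) * (m:ℝ)^((1:ℝ)/2 - H)) := by
        intro k hk
        obtain ⟨hk1, hk2, hk3, hk4⟩ := hkB k hk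
        have hc0 : 0 ≤ |lam k| * (L * (k*π/T)) := by positivity
        have hcbound : |lam k| * (L * (k*π/T)) ≤ (2*C*L*π/T) * (m:ℝ)^((1:ℝ)/2 - H) := by
          have h1 : |lam k| ≤ C * (k:ℝ)^(-(H+1/2)) := hlam k hk4
          have h2 : |lam k| * (L * (k*π/T)) ≤ (C * (k:ℝ)^(-(H+1/2))) * (L * (k*π/T)) := by
            refine mul_le_mul_of_nonneg_right h1 (by positivity)
          refine h2.trans ?_
          have h3 : (C * (k:ℝ)^(-(H+1/2))) * (L * (k*π/T))
              = (C*L*π/T) * ((k:ℝ)^(-(H+1/2)) * k) := by ring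
          have h4 : (k:ℝ)^(-(H+1/2)) * k = (k:ℝ)^((1:ℝ)/2 - H) := by
            calc (k:ℝ)^(-(H+1/2)) * k = (k:ℝ)^(-(H+1/2)) * (k:ℝ)^(1:ℝ) := by
                  rw [Real.rpow_one]
              _ = (k:ℝ)^(-(H+1/2) + 1) := by rw [← Real.rpow_add hk3]
              _ = (k:ℝ)^((1:ℝ)/2 - H) := by congr 1; ring
          have h5 : (k:ℝ)^((1:ℝ)/2 - H) ≤ 2 * (m:ℝ)^((1:ℝ)/2 - H) := by
            rcases le_or_gt ((1:ℝ)/2 - H) 0 with hneg | hpos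
            · have := Real.rpow_le_rpow_of_nonpos hm0 hk1 hneg
              have hpos2 : (0:ℝ) < (m:ℝ)^((1:ℝ)/2 - H) := Real.rpow_pos_of_pos hm0 _
              linarith
            · have hb1 : (k:ℝ)^((1:ℝ)/2 - H) ≤ (2*(m:ℝ))^((1:ℝ)/2 - H) :=
                Real.rpow_le_rpow (by positivity) hk2 hpos.le
              have hb2 : ((2:ℝ)*(m:ℝ))^((1:ℝ)/2 - H)
                  = 2^((1:ℝ)/2 - H) * (m:ℝ)^((1:ℝ)/2 - H) :=
                Real.mul_rpow (by norm_num) hm0.le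
              have hb3 : (2:ℝ)^((1:ℝ)/2 - H) ≤ 2^(1:ℝ) := by
                refine Real.rpow_le_rpow_of_exponent_le (by norm_num) (by linarith)
              rw [Real.rpow_one] at hb3
              have hpos2 : (0:ℝ) < (m:ℝ)^((1:ℝ)/2 - H) := Real.rpow_pos_of_pos hm0 _
              calc (k:ℝ)^((1:ℝ)/2 - H) ≤ (2*(m:ℝ))^((1:ℝ)/2 - H) := hb1
                _ = 2^((1:ℝ)/2 - H) * (m:ℝ)^((1:ℝ)/2 - H) := hb2
                _ ≤ 2 * (m:ℝ)^((1:ℝ)/2 - H) := by nlinarith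
          calc (C * (k:ℝ)^(-(H+1/2))) * (L * (k*π/T))
              = (C*L*π/T) * ((k:ℝ)^((1:ℝ)/2 - H)) := by rw [← h4]; ring
            _ ≤ (C*L*π/T) * (2 * (m:ℝ)^((1:ℝ)/2 - H)) := by
                refine mul_le_mul_of_nonneg_left ?_ (by positivity)
                have hpos2 : (0:ℝ) < (m:ℝ)^((1:ℝ)/2 - H) := Real.rpow_pos_of_pos hm0 _
                linarith [h5]
            _ = (2*C*L*π/T) * (m:ℝ)^((1:ℝ)/2 - H) := by ring
        have hZ4 := integral_abs_of_law P (Z k) (hZmeas k) (hZlaw k)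
        have hZ0 : 0 ≤ ∫ ω, |Z k ω| ∂P := integral_nonneg fun ω => abs_nonneg _
        calc (|lam k| * (L * (k*π/T))) * ∫ ω, |Z k ω| ∂P
            ≤ ((2*C*L*π/T) * (m:ℝ)^((1:ℝ)/2 - H)) * 4 := by
              refine mul_le_mul hcbound hZ4 hZ0 (by positivity)
          _ = 4 * ((2*C*L*π/T) * (m:ℝ)^((1:ℝ)/2 - H)) := by ring
      have := Finset.sum_le_card_nsmul B _ _ hper
      rw [hBcard, nsmul_eq_mul] at this
      exact this
    -- combine
    have hint_eq : ∫ ω, h ω ∂P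
        = (∫ ω, (s.sup' hs fun i => |G i ω|) ∂P) + (T/n2) * ∫ ω, Lip ω ∂P := by
      rw [hhdef]
      rw [integral_add hsup_int (hLip_int.const_mul _), integral_const_mul]
    rw [hint_eq]
    have hLipterm : (T/n2) * ∫ ω, Lip ω ∂P
        ≤ (8*C*L*π/Real.sqrt (Real.log 2)) * (m:ℝ)^(-H) * Real.sqrt (Real.log m) := by
      have hstep1 : (T/n2) * ∫ ω, Lip ω ∂P
          ≤ (T/n2) * ((m:ℝ) * (4 * ((2*C*L*π/T) * (m:ℝ)^((1:ℝ)/2 - H)))) := by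
        refine mul_le_mul_of_nonneg_left hELip hTn2.le
      refine hstep1.trans ?_
      have hkey : (T/n2) * ((m:ℝ) * (4 * ((2*C*L*π/T) * (m:ℝ)^((1:ℝ)/2 - H))))
          = 8*C*L*π * ((m:ℝ)^(-(1:ℝ)/2) * (m:ℝ)^(-H)) := by
        have hr1 : (m:ℝ)^((1:ℝ)/2 - H) * (m:ℝ) / ((m:ℝ)^(2:ℕ))
            = (m:ℝ)^(-(1:ℝ)/2) * (m:ℝ)^(-H) := by
          rw [div_eq_mul_inv]
          calc (m:ℝ)^((1:ℝ)/2 - H) * (m:ℝ) * ((m:ℝ)^(2:ℕ))⁻¹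
              = (m:ℝ)^((1:ℝ)/2 - H) * (m:ℝ)^(1:ℝ) * ((m:ℝ)^((2:ℕ):ℝ))⁻¹ := by
                rw [Real.rpow_one, Real.rpow_natCast]
            _ = (m:ℝ)^((1:ℝ)/2 - H) * (m:ℝ)^(1:ℝ) * (m:ℝ)^(-((2:ℕ):ℝ)) := by
                rw [Real.rpow_neg hm0.le]
            _ = (m:ℝ)^((1:ℝ)/2 - H + 1 + -((2:ℕ):ℝ)) := by
                rw [← Real.rpow_add hm0, ← Real.rpow_add hm0]
            _ = (m:ℝ)^(-(1:ℝ)/2 + -H) := by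
                congr 1
                push_cast
                ring
            _ = (m:ℝ)^(-(1:ℝ)/2) * (m:ℝ)^(-H) := by rw [Real.rpow_add hm0]
        rw [hn2R]
        have hTne : T ≠ 0 := ne_of_gt hT
        calc (T/((m:ℝ)^(2:ℕ))) * ((m:ℝ) * (4 * ((2*C*L*π/T) * (m:ℝ)^((1:ℝ)/2 - H))))
            = 8*C*L*π * ((m:ℝ)^((1:ℝ)/2 - H) * (m:ℝ) / ((m:ℝ)^(2:ℕ))) * (T/T) := by
              ring
          _ = 8*C*L*π * ((m:ℝ)^(-(1:ℝ)/2) * (m:ℝ)^(-H)) := by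
              rw [div_self hTne, mul_one, hr1]
      rw [hkey]
      -- now 8CLπ m^{-1/2} m^{-H} ≤ (8CLπ/√log2) m^{-H} √(log m)
      have hu1 : (m:ℝ)^(-(1:ℝ)/2) ≤ 1 := by
        rw [show (-(1:ℝ)/2) = -(1/2 : ℝ) by norm_num]
        exact Real.rpow_le_one_of_one_le_of_nonpos hm1 (by norm_num)
      have hu0 : (0:ℝ) < (m:ℝ)^(-(1:ℝ)/2) := Real.rpow_pos_of_pos hm0 _
      have hw2 : (0:ℝ) < Real.sqrt (Real.log 2) := Real.sqrt_pos.2 hlog2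
      have hwm : Real.sqrt (Real.log 2) ≤ Real.sqrt (Real.log m) := Real.sqrt_le_sqrt hlogm
      have hstep2 : 8*C*L*π * ((m:ℝ)^(-(1:ℝ)/2) * (m:ℝ)^(-H)) ≤ 8*C*L*π * (m:ℝ)^(-H) := by
        have h0 : (0:ℝ) ≤ 8*C*L*π := by positivity
        refine mul_le_mul_of_nonneg_left ?_ h0
        nlinarith [hmH, hu1, hu0]
      refine hstep2.trans ?_
      rw [show (8*C*L*π/Real.sqrt (Real.log 2)) * (m:ℝ)^(-H) * Real.sqrt (Real.log m)
        = (8*C*L*π) * (m:ℝ)^(-H) * (Real.sqrt (Real.log m) / Real.sqrt (Real.log 2)) by ring]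
      have hrat : (1:ℝ) ≤ Real.sqrt (Real.log m) / Real.sqrt (Real.log 2) := by
        rw [le_div_iff₀ hw2]
        linarith
      have h0 : (0:ℝ) ≤ (8*C*L*π) * (m:ℝ)^(-H) := by positivity
      nlinarith [h0, hrat]
    linarith [hmax2, hLipterm]


set_option maxHeartbeats 1600000 in
/-- in the setting of the uniformly convergent Gaussian series
`∑_k λ_k e_k(kπt/T) Z_k` (λ_k decaying like `k^(−(H+1/2))`, `e_k` uniformly bounded and
uniformly Lipschitz, `Z_k` i.i.d. standard Gaussians), the expected sup-norm of the tail
starting at `N` is at most `A N^(−H) √(log N)`. -/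
theorem expected_sup_of_tail_bound
    {Ω : Type*} [MeasurableSpace Ω] (P : Measure Ω) [IsProbabilityMeasure P]
    (T H C M L : ℝ) (hT : 0 < T) (hH : 0 < H) (hC : 0 < C) (hM : 0 < M) (hL : 0 < L)
    (lam : ℕ → ℝ) (hlam : ∀ k : ℕ, 1 ≤ k → |lam k| ≤ C * (k : ℝ) ^ (-(H + 1 / 2)))
    (e : ℕ → ℝ → ℝ) (he_cont : ∀ k, Continuous (e k))
    (he_bdd : ∀ k x, |e k x| ≤ M)
    (he_lip : ∀ k x y, |e k x - e k y| ≤ L * |x - y|)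
    (Z : ℕ → Ω → ℝ) (hZmeas : ∀ k, Measurable (Z k))
    (hZindep : iIndepFun Z P)
    (hZlaw : ∀ k, P.map (Z k) = gaussianReal 0 1)
    (hconv : ∀ᵐ ω ∂P, TendstoUniformlyOn
        (fun N t => ∑ k ∈ Finset.range (N + 1), lam k * e k (k * π * t / T) * Z k ω)
        (fun t => ∑' k : ℕ, lam k * e k (k * π * t / T) * Z k ω)
        atTop (Set.Icc 0 T)) :
    ∃ A > (0 : ℝ), ∀ N : ℕ, 2 ≤ N →
      (∫ ω, (⨆ t : Set.Icc (0 : ℝ) T,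
          |(∑' k : ℕ, lam k * e k (k * π * (t : ℝ) / T) * Z k ω) -
            ∑ k ∈ Finset.range N, lam k * e k (k * π * (t : ℝ) / T) * Z k ω|) ∂P)
        ≤ A * (N : ℝ) ^ (-H) * Real.sqrt (Real.log N) := by
  have hlog2 : (0:ℝ) < Real.log 2 := Real.log_pos one_lt_two
  have hsq2 : (0:ℝ) < Real.sqrt (Real.log 2) := Real.sqrt_pos.2 hlog2
  set K1 : ℝ := 6*C*M + 8*C*L*π/Real.sqrt (Real.log 2) with hK1def
  have hK1 : 0 < K1 := by
    have h1 : 0 < 6*C*M := by positivity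
    have h2 : 0 < 8*C*L*π/Real.sqrt (Real.log 2) := by
      apply div_pos (by positivity) hsq2
    rw [hK1def]; linarith
  set r : ℝ := (2:ℝ)^(-H) with hrdef
  have hr0 : 0 < r := Real.rpow_pos_of_pos two_pos _
  have hr1 : r < 1 := Real.rpow_lt_one_of_one_lt_of_neg one_lt_two (by linarith)
  have hS : Summable (fun j : ℕ => ((j:ℝ)+1) * r^j) := by
    have h1 : Summable (fun j : ℕ => (j:ℝ)^(1:ℕ) * r^j) :=
      summable_pow_mul_geometric_of_norm_lt_one 1
        (by rw [Real.norm_eq_abs, abs_of_pos hr0]; exact hr1)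
    have h2 : Summable (fun j : ℕ => r^j) :=
      summable_geometric_of_lt_one hr0.le hr1
    have := h1.add h2
    refine this.congr fun j => ?_
    push_cast; ring
  set Ssum : ℝ := ∑' j : ℕ, ((j:ℝ)+1) * r^j with hSsumdef
  have hSsum1 : 1 ≤ Ssum := by
    have := Summable.le_tsum hS 0 (fun j _ => by positivity)
    simpa using this
  refine ⟨K1 * Ssum, by nlinarith, ?_⟩
  intro N hN
  have hN0 : (0:ℝ) < N := by positivity
  have hN2 : (2:ℝ) ≤ N := by exact_mod_cast hN
  have hlogN : Real.log 2 ≤ Real.log N := Real.log_le_log two_pos hN2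
  have hlogN0 : (0:ℝ) < Real.log N := lt_of_lt_of_le hlog2 hlogN
  have hNH : (0:ℝ) < (N:ℝ)^(-H) := Real.rpow_pos_of_pos hN0 _
  have hsqN : (0:ℝ) < Real.sqrt (Real.log N) := Real.sqrt_pos.2 hlogN0
  -- blocks
  have hblock : ∀ j : ℕ, ∃ h : Ω → ℝ, Measurable h ∧ Integrable h P ∧ (∀ ω, 0 ≤ h ω) ∧
      (∀ ω, ∀ t ∈ Set.Icc (0:ℝ) T,
        |∑ k ∈ Finset.Ico (2^j*N) (2*(2^j*N)), lam k * e k (k * π * t / T) * Z k ω| ≤ h ω) ∧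
      ∫ ω, h ω ∂P ≤ K1 * ((2^j*N : ℕ):ℝ) ^ (-H) * Real.sqrt (Real.log (2^j*N : ℕ)) := by
    intro j
    refine block_bound P T H C M L hT hH hC hM hL lam hlam e he_bdd he_lip Z hZmeas
      hZindep hZlaw (2^j*N) ?_
    calc 2 ≤ N := hN
      _ = 1 * N := by ring
      _ ≤ 2^j * N := Nat.mul_le_mul_right N (Nat.one_le_two_pow)
  choose hf hfmeas hfint hfnn hfpt hfI using hblock
  -- the bound sequence
  set b : ℕ → ℝ := fun j => (K1 * (N:ℝ)^(-H) * Real.sqrt (Real.log N)) * (((j:ℝ)+1) * r^j)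
    with hbdef
  have hb_nonneg : ∀ j, 0 ≤ b j := fun j => by positivity
  have hb_sum : Summable b := hS.mul_left _
  have hb_tsum : ∑' j, b j = (K1 * Ssum) * (N:ℝ)^(-H) * Real.sqrt (Real.log N) := by
    rw [hbdef, tsum_mul_left, hSsumdef]
    ring
  -- per-block integral bounds
  have hIb : ∀ j, ∫ ω, hf j ω ∂P ≤ b j := by
    intro j
    refine (hfI j).trans ?_
    have hmjR : ((2^j*N : ℕ):ℝ) = (2:ℝ)^j * N := by push_cast; ring
    have hpow : ((2:ℝ)^(j:ℕ))^(-H) = r^j := by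
      rw [← Real.rpow_natCast 2 j, ← Real.rpow_mul (by norm_num : (0:ℝ) ≤ 2), hrdef,
        ← Real.rpow_natCast ((2:ℝ)^(-H)) j, ← Real.rpow_mul (by norm_num : (0:ℝ) ≤ 2)]
      congr 1
      ring
    have hfac : ((2^j*N : ℕ):ℝ)^(-H) = r^j * (N:ℝ)^(-H) := by
      rw [hmjR, Real.mul_rpow (by positivity) (by positivity), hpow]
    have hlogmj : Real.log ((2^j*N : ℕ):ℝ) = j * Real.log 2 + Real.log N := by
      rw [hmjR, Real.log_mul (by positivity) (by positivity), Real.log_pow]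
    have hsqrt : Real.sqrt (Real.log ((2^j*N : ℕ):ℝ)) ≤ ((j:ℝ)+1) * Real.sqrt (Real.log N) := by
      have h1 : Real.log ((2^j*N : ℕ):ℝ) ≤ ((j:ℝ)+1)^2 * Real.log N := by
        rw [hlogmj]
        have hj0 : (0:ℝ) ≤ (j:ℝ) := Nat.cast_nonneg j
        nlinarith [mul_nonneg (mul_nonneg hj0 hj0) hlogN0.le,
          mul_le_mul_of_nonneg_left hlogN hj0, mul_nonneg hj0 hlogN0.le]
      calc Real.sqrt (Real.log ((2^j*N : ℕ):ℝ)) ≤ Real.sqrt (((j:ℝ)+1)^2 * Real.log N) :=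
            Real.sqrt_le_sqrt h1
        _ = ((j:ℝ)+1) * Real.sqrt (Real.log N) := by
            rw [Real.sqrt_mul (sq_nonneg _), Real.sqrt_sq (by positivity)]
    calc K1 * ((2^j*N : ℕ):ℝ)^(-H) * Real.sqrt (Real.log ((2^j*N : ℕ):ℝ))
        ≤ K1 * ((2^j*N : ℕ):ℝ)^(-H) * (((j:ℝ)+1) * Real.sqrt (Real.log N)) := by
          refine mul_le_mul_of_nonneg_left hsqrt ?_
          have := Real.rpow_pos_of_pos (show (0:ℝ) < ((2^j*N : ℕ):ℝ) by positivity) (-H)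
          positivity
      _ = b j := by rw [hfac, hbdef]; ring
  have hInn : ∀ j, 0 ≤ ∫ ω, hf j ω ∂P := fun j => integral_nonneg (hfnn j)
  have hI_sum : Summable (fun j => ∫ ω, hf j ω ∂P) :=
    Summable.of_nonneg_of_le hInn hIb hb_sum
  -- lintegral control
  have hlint_eq : ∀ j, ∫⁻ ω, ENNReal.ofReal (hf j ω) ∂P = ENNReal.ofReal (∫ ω, hf j ω ∂P) :=
    fun j => (ofReal_integral_eq_lintegral_ofReal (hfint j)
      (Filter.Eventually.of_forall (hfnn j))).symm
  have hnnorm_eq : ∀ j, ∀ ω, (‖hf j ω‖₊ : ℝ≥0∞) = ENNReal.ofReal (hf j ω) := by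
    intro j ω
    rw [← enorm_eq_nnnorm, ← ofReal_norm, Real.norm_eq_abs, abs_of_nonneg (hfnn j ω)]
  have hlint_b : ∀ j, ∫⁻ ω, (‖hf j ω‖₊ : ℝ≥0∞) ∂P ≤ ENNReal.ofReal (b j) := by
    intro j
    have h1 : ∫⁻ ω, (‖hf j ω‖₊ : ℝ≥0∞) ∂P = ENNReal.ofReal (∫ ω, hf j ω ∂P) := by
      rw [← hlint_eq j]
      exact lintegral_congr fun ω => hnnorm_eq j ω
    rw [h1]
    exact ENNReal.ofReal_le_ofReal (hIb j)
  have htot : ∑' j, ∫⁻ ω, (‖hf j ω‖₊ : ℝ≥0∞) ∂P ≠ ⊤ := by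
    have h1 : ∑' j, ∫⁻ ω, (‖hf j ω‖₊ : ℝ≥0∞) ∂P ≤ ∑' j, ENNReal.ofReal (b j) :=
      ENNReal.tsum_le_tsum hlint_b
    have h2 : ∑' j, ENNReal.ofReal (b j) = ENNReal.ofReal (∑' j, b j) :=
      (ENNReal.ofReal_tsum_of_nonneg hb_nonneg hb_sum).symm
    rw [h2] at h1
    exact ne_top_of_le_ne_top ENNReal.ofReal_ne_top h1
  -- a.e. summability
  set F : Ω → ℝ≥0∞ := fun ω => ∑' j, ENNReal.ofReal (hf j ω) with hFdef
  have hFmeas : Measurable F := by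
    rw [hFdef]
    exact Measurable.ennreal_tsum fun j => (hfmeas j).ennreal_ofReal
  have hFlint : ∫⁻ ω, F ω ∂P ≠ ⊤ := by
    have h1 : ∫⁻ ω, F ω ∂P = ∑' j, ∫⁻ ω, ENNReal.ofReal (hf j ω) ∂P := by
      rw [hFdef]
      exact lintegral_tsum fun j => ((hfmeas j).ennreal_ofReal).aemeasurable
    rw [h1]
    have h2 : ∀ j, ∫⁻ ω, ENNReal.ofReal (hf j ω) ∂P = ∫⁻ ω, (‖hf j ω‖₊ : ℝ≥0∞) ∂P :=
      fun j => (lintegral_congr fun ω => hnnorm_eq j ω).symm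
    rw [tsum_congr h2]
    exact htot
  have hae_fin : ∀ᵐ ω ∂P, F ω < ⊤ := ae_lt_top hFmeas hFlint
  have hae_summ : ∀ᵐ ω ∂P, Summable (fun j => hf j ω) := by
    filter_upwards [hae_fin] with ω hω
    have h1 : (∑' j, ((hf j ω).toNNReal : ℝ≥0∞)) ≠ ⊤ := by
      have : ∀ j, ((hf j ω).toNNReal : ℝ≥0∞) = ENNReal.ofReal (hf j ω) := fun j => rfl
      rw [tsum_congr this]
      exact hω.ne
    have h2 : Summable (fun j => (hf j ω).toNNReal) :=
      ENNReal.tsum_coe_ne_top_iff_summable.1 h1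
    have h3 : Summable (fun j => ((hf j ω).toNNReal : ℝ)) := NNReal.summable_coe.2 h2
    refine h3.congr fun j => ?_
    exact Real.coe_toNNReal _ (hfnn j ω)
  -- the dominating function g
  set g : Ω → ℝ := fun ω => ∑' j, hf j ω with hgdef
  have hg_eq : ∀ ω, g ω = (F ω).toReal := by
    intro ω
    rw [hgdef, hFdef]
    rw [ENNReal.tsum_toReal_eq fun j => ENNReal.ofReal_ne_top]
    exact tsum_congr fun j => (ENNReal.toReal_ofReal (hfnn j ω)).symm
  have hg_nonneg : ∀ ω, 0 ≤ g ω := by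
    intro ω; rw [hg_eq]; exact ENNReal.toReal_nonneg
  have hg_meas : Measurable g := by
    have : g = fun ω => (F ω).toReal := funext hg_eq
    rw [this]
    exact hFmeas.ennreal_toReal
  have hg_int : Integrable g P := by
    refine ⟨hg_meas.aestronglyMeasurable, ?_⟩
    rw [hasFiniteIntegral_iff_norm]
    have h1 : ∀ ω, ENNReal.ofReal ‖g ω‖ ≤ F ω := by
      intro ω
      rw [Real.norm_eq_abs, abs_of_nonneg (hg_nonneg ω), hg_eq]
      exact ENNReal.ofReal_toReal_le
    exact lt_of_le_of_lt (lintegral_mono h1) hFlint.lt_top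
  have hg_integral : ∫ ω, g ω ∂P = ∑' j, ∫ ω, hf j ω ∂P := by
    rw [hgdef]
    exact integral_tsum (fun j => (hfmeas j).aestronglyMeasurable) htot
  -- a.e. pointwise domination of the sup
  haveI hIccne : Nonempty (Set.Icc (0:ℝ) T) := (Set.nonempty_Icc.2 hT.le).to_subtype
  have hdom : ∀ᵐ ω ∂P, (⨆ t : Set.Icc (0 : ℝ) T,
      |(∑' k : ℕ, lam k * e k (k * π * (t : ℝ) / T) * Z k ω) -
        ∑ k ∈ Finset.range N, lam k * e k (k * π * (t : ℝ) / T) * Z k ω|) ≤ g ω := by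
    filter_upwards [hconv, hae_summ] with ω hconvω hsummω
    apply ciSup_le
    intro t
    have htmem : (t:ℝ) ∈ Set.Icc (0:ℝ) T := t.2
    -- convergence of partial sums at t
    have hptw : Tendsto (fun n => ∑ k ∈ Finset.range (n + 1),
        lam k * e k (k * π * (t:ℝ) / T) * Z k ω) atTop
        (𝓝 (∑' k : ℕ, lam k * e k (k * π * (t:ℝ) / T) * Z k ω)) :=
      hconvω.tendsto_at htmem
    have hptw2 : Tendsto (fun n => ∑ k ∈ Finset.range n,
        lam k * e k (k * π * (t:ℝ) / T) * Z k ω) atTop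
        (𝓝 (∑' k : ℕ, lam k * e k (k * π * (t:ℝ) / T) * Z k ω)) := by
      rw [← tendsto_add_atTop_iff_nat 1]
      exact hptw
    have hmono : ∀ J : ℕ, J ≤ 2^J * N := by
      intro J
      calc J ≤ 2^J := (Nat.lt_two_pow_self (n := J)).le
        _ = 2^J * 1 := by ring
        _ ≤ 2^J * N := Nat.mul_le_mul_left _ (by omega)
    have htend : Tendsto (fun J : ℕ => 2^J * N) atTop atTop :=
      tendsto_atTop_mono hmono tendsto_id
    have hptw3 : Tendsto (fun J => ∑ k ∈ Finset.range (2^J * N),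
        lam k * e k (k * π * (t:ℝ) / T) * Z k ω) atTop
        (𝓝 (∑' k : ℕ, lam k * e k (k * π * (t:ℝ) / T) * Z k ω)) :=
      hptw2.comp htend
    have hNle : ∀ J : ℕ, N ≤ 2^J * N :=
      fun J => Nat.le_mul_of_pos_left _ (Nat.two_pow_pos J)
    have hptw4 : Tendsto (fun J => (∑ k ∈ Finset.range (2^J * N),
        lam k * e k (k * π * (t:ℝ) / T) * Z k ω)
        - ∑ k ∈ Finset.range N, lam k * e k (k * π * (t:ℝ) / T) * Z k ω) atTop
        (𝓝 ((∑' k : ℕ, lam k * e k (k * π * (t:ℝ) / T) * Z k ω)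
          - ∑ k ∈ Finset.range N, lam k * e k (k * π * (t:ℝ) / T) * Z k ω)) :=
      hptw3.sub_const _
    -- block decomposition
    have hblockid : ∀ J : ℕ, (∑ k ∈ Finset.range (2^J * N),
        lam k * e k (k * π * (t:ℝ) / T) * Z k ω)
        - ∑ k ∈ Finset.range N, lam k * e k (k * π * (t:ℝ) / T) * Z k ω
        = ∑ j ∈ Finset.range J, ∑ k ∈ Finset.Ico (2^j*N) (2*(2^j*N)),
            lam k * e k (k * π * (t:ℝ) / T) * Z k ω := by
      intro J
      have hkey : ∀ J : ℕ, ∑ j ∈ Finset.range J, ∑ k ∈ Finset.Ico (2^j*N) (2*(2^j*N)),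
          lam k * e k (k * π * (t:ℝ) / T) * Z k ω
          = ∑ k ∈ Finset.Ico N (2^J*N), lam k * e k (k * π * (t:ℝ) / T) * Z k ω := by
        intro J
        induction J with
        | zero => simp
        | succ J ih =>
            rw [Finset.sum_range_succ, ih, show 2^(J+1)*N = 2*(2^J*N) by ring]
            exact Finset.sum_Ico_consecutive _ (hNle J)
              (Nat.le_mul_of_pos_left _ two_pos)
      rw [← Finset.sum_Ico_eq_sub _ (hNle J)]
      exact (hkey J).symm
    have hJb : ∀ J : ℕ, |∑ j ∈ Finset.range J, ∑ k ∈ Finset.Ico (2^j*N) (2*(2^j*N)),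
        lam k * e k (k * π * (t:ℝ) / T) * Z k ω| ≤ g ω := by
      intro J
      calc |∑ j ∈ Finset.range J, ∑ k ∈ Finset.Ico (2^j*N) (2*(2^j*N)),
          lam k * e k (k * π * (t:ℝ) / T) * Z k ω|
          ≤ ∑ j ∈ Finset.range J, |∑ k ∈ Finset.Ico (2^j*N) (2*(2^j*N)),
            lam k * e k (k * π * (t:ℝ) / T) * Z k ω| := Finset.abs_sum_le_sum_abs _ _
        _ ≤ ∑ j ∈ Finset.range J, hf j ω :=
            Finset.sum_le_sum fun j _ => hfpt j ω (t:ℝ) htmem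
        _ ≤ ∑' j, hf j ω := Summable.sum_le_tsum _ (fun i _ => hfnn i ω) hsummω
        _ = g ω := by rw [hgdef]
    refine le_of_tendsto hptw4.abs (Filter.Eventually.of_forall fun J => ?_)
    rw [hblockid J]
    exact hJb J
  -- conclusion
  have hsup_nonneg : ∀ ω, 0 ≤ ⨆ t : Set.Icc (0 : ℝ) T,
      |(∑' k : ℕ, lam k * e k (k * π * (t : ℝ) / T) * Z k ω) -
        ∑ k ∈ Finset.range N, lam k * e k (k * π * (t : ℝ) / T) * Z k ω| :=
    fun ω => Real.iSup_nonneg fun t => abs_nonneg _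
  calc ∫ ω, (⨆ t : Set.Icc (0 : ℝ) T,
        |(∑' k : ℕ, lam k * e k (k * π * (t : ℝ) / T) * Z k ω) -
          ∑ k ∈ Finset.range N, lam k * e k (k * π * (t : ℝ) / T) * Z k ω|) ∂P
      ≤ ∫ ω, g ω ∂P :=
        integral_mono_of_nonneg (Filter.Eventually.of_forall hsup_nonneg) hg_int hdom
    _ = ∑' j, ∫ ω, hf j ω ∂P := hg_integral
    _ ≤ ∑' j, b j := Summable.tsum_le_tsum hIb hI_sum hb_sum
    _ = (K1 * Ssum) * (N:ℝ)^(-H) * Real.sqrt (Real.log N) := hb_tsum
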